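/- Let d ≥ 1 and for each i ∈ {1,…,d} let P_i ⊂ ℝ^d be a nonempty finite point set. Assume the sets P_1,…,P_d are well-separated, and assume general position in the sense that for every colorful selection p = (p_1,…,p_d) with p_i ∈ P_i and every point q ∈ P_j \ {p_j} (any j), D_p(q) ≠ 0. Let α_1,…,α_d be integers with α_i ∈ {1, |P_i|} for all i. Consider the grid whose vertices are the colorful selections v = (v_1,…,v_d) with v_i ∈ P_i, with two vertices adjacent iff they differ in exactly one coordinate, and define an orientation σ as follows: for an edge from v to w where w is obtained from v by replacing v_i by p ∈ P_i \ {v_i}, set σ(v, w) := 0 if either (α_i = 1 and D_v(p) < 0) or (α_i = |P_i| and D_v(p) > 0), and σ(v, w) := 1 otherwise. Then σ is a grid unique sink orientation: for every choice of nonempty subsets Q_i ⊆ P_i (i = 1,…,d), there is exactly one vertex v with v_i ∈ Q_i for all i such that σ(v, w) = 0 for every vertex w of the induced subgrid adjacent to v. -/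

import Mathlib

open scoped Matrix

/-- `D_p x`: the determinant of the `d × d` matrix whose `i`-th row is `p i - x`. -/
noncomputable def Dmap {d : ℕ} (p : Fin d → (Fin d → ℝ)) (x : Fin d → ℝ) : ℝ :=
  Matrix.det (Matrix.of fun i j => p i j - x j)

/-- Point sets `P 0, …, P (k-1)` in `ℝ^d` are well-separated: no affine subspace
of dimension at most `k - 2` intersects every convex hull `conv (P i)`. -/
def WellSeparated {d k : ℕ} (P : Fin k → Set (Fin d → ℝ)) : Prop :=
  ¬ ∃ F : AffineSubspace ℝ (Fin d → ℝ),
      (Module.finrank ℝ F.direction : ℤ) ≤ (k : ℤ) - 2 ∧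
      ∀ i, ((F : Set (Fin d → ℝ)) ∩ convexHull ℝ (P i)).Nonempty

namespace TG

variable {d : ℕ}

lemma dmap_self (p : Fin d → Fin d → ℝ) (j : Fin d) : Dmap p (p j) = 0 :=
  Matrix.det_eq_zero_of_row_eq_zero j (fun j' => sub_self _)

lemma dmap_rep (hd : 0 < d) (p : Fin d → Fin d → ℝ) (x : Fin d → ℝ) :
    Dmap p x = (Matrix.updateRow (Matrix.of fun i j => p i j - p ⟨0, hd⟩ j) ⟨0, hd⟩
      (p ⟨0, hd⟩ - x)).det := by
  classical
  apply Matrix.det_eq_of_forall_row_eq_smul_add_const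
    (fun i => if i = (⟨0, hd⟩ : Fin d) then 0 else 1) ⟨0, hd⟩ (if_pos rfl)
  intro i j
  by_cases hi : i = (⟨0, hd⟩ : Fin d)
  · subst hi
    simp [Matrix.updateRow_self]
  · simp only [Matrix.updateRow_ne hi, Matrix.updateRow_self, Matrix.of_apply, if_neg hi,
      Pi.sub_apply]
    ring

lemma dmap_combo (hd : 0 < d) (p : Fin d → Fin d → ℝ) (s : ℝ) (y₁ y₂ : Fin d → ℝ) :
    Dmap p ((1 - s) • y₁ + s • y₂) = (1 - s) * Dmap p y₁ + s * Dmap p y₂ := by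
  rw [dmap_rep hd, dmap_rep hd, dmap_rep hd]
  have h : p ⟨0, hd⟩ - ((1 - s) • y₁ + s • y₂)
      = (1 - s) • (p ⟨0, hd⟩ - y₁) + s • (p ⟨0, hd⟩ - y₂) := by
    ext j; simp [Pi.sub_apply]; ring
  rw [h, Matrix.det_updateRow_add, Matrix.det_updateRow_smul, Matrix.det_updateRow_smul]

lemma det_updateRow_sum' (M : Matrix (Fin d) (Fin d) ℝ) (k : Fin d) (w : Fin d → ℝ)
    (r : Fin d → Fin d → ℝ) :
    (Matrix.updateRow M k (∑ i, w i • r i)).det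
      = ∑ i, w i * (Matrix.updateRow M k (r i)).det := by
  classical
  have H : ∀ s : Finset (Fin d), (Matrix.updateRow M k (∑ i ∈ s, w i • r i)).det
      = ∑ i ∈ s, w i * (Matrix.updateRow M k (r i)).det := by
    intro s
    induction s using Finset.induction_on with
    | empty =>
      simp only [Finset.sum_empty]
      exact Matrix.det_eq_zero_of_row_eq_zero k (by simp)
    | insert _ _ hni ih =>
      rw [Finset.sum_insert hni, Finset.sum_insert hni, Matrix.det_updateRow_add,
        Matrix.det_updateRow_smul, ih]
  exact H Finset.univ

lemma dmap_affine_sum (hd : 0 < d) (p : Fin d → Fin d → ℝ) (w : Fin d → ℝ)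
    (hw : ∑ i, w i = 1) (y : Fin d → Fin d → ℝ) :
    Dmap p (∑ i, w i • y i) = ∑ i, w i * Dmap p (y i) := by
  rw [dmap_rep hd]
  have h : p ⟨0, hd⟩ - (∑ i, w i • y i) = ∑ i, w i • (p ⟨0, hd⟩ - y i) := by
    ext j
    simp only [Pi.sub_apply, Finset.sum_apply, Pi.smul_apply, smul_eq_mul, mul_sub]
    rw [Finset.sum_sub_distrib, ← Finset.sum_mul, hw]
    ring
  rw [h, det_updateRow_sum']
  exact Finset.sum_congr rfl fun i _ => by rw [dmap_rep hd]

lemma dmap_update_row_matrix (F : Fin d → Fin d → ℝ) (k : Fin d) (y z : Fin d → ℝ) :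
    (Matrix.of fun i j => (Function.update F k y) i j - z j)
      = Matrix.updateRow (Matrix.of fun i j => F i j - z j) k (y - z) := by
  ext i j
  by_cases hi : i = k
  · subst hi; simp [Function.update_self]
  · simp [Matrix.updateRow_ne hi, Function.update_of_ne hi]

lemma dmap_update_combo (F : Fin d → Fin d → ℝ) (k : Fin d) (σ : ℝ) (y₁ y₂ z : Fin d → ℝ) :
    Dmap (Function.update F k ((1 - σ) • y₁ + σ • y₂)) z
      = (1 - σ) * Dmap (Function.update F k y₁) z + σ * Dmap (Function.update F k y₂) z := by
  unfold Dmap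
  rw [dmap_update_row_matrix, dmap_update_row_matrix, dmap_update_row_matrix]
  have h : ((1 - σ) • y₁ + σ • y₂) - z = (1 - σ) • (y₁ - z) + σ • (y₂ - z) := by
    ext j; simp [Pi.sub_apply]; ring
  rw [h, Matrix.det_updateRow_add, Matrix.det_updateRow_smul, Matrix.det_updateRow_smul]

lemma dmap_continuous_family (x : Fin d → ℝ → (Fin d → ℝ)) (hx : ∀ i, Continuous (x i))
    (z : Fin d → ℝ) : Continuous fun t => Dmap (fun i => x i t) z := by
  unfold Dmap
  exact (continuous_matrix fun i j =>
    ((continuous_apply j).comp (hx i)).sub continuous_const).matrix_det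

lemma static_core (hd : 0 < d) (P : Fin d → Set (Fin d → ℝ)) (hws : WellSeparated P)
    (v w : Fin d → Fin d → ℝ) (z : Fin d → ℝ) (a b : ℝ) (y : Fin d → Fin d → ℝ)
    (hmem : ∀ i, y i ∈ convexHull ℝ (P i))
    (hzero : ∀ i, a * Dmap v (y i) + b * Dmap w (y i) = 0)
    (hz : a * Dmap v z + b * Dmap w z ≠ 0)
    (hdet : Dmap y z = 0) : False := by
  classical
  obtain ⟨g, hg0, hgM⟩ := Matrix.exists_vecMul_eq_zero_iff.mpr hdet
  have hrel : ∀ j, (∑ i, g i * (y i j - z j)) = 0 := by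
    intro j
    have h := congr_fun hgM j
    simpa [Matrix.vecMul, dotProduct] using h
  by_cases hS : (∑ i, g i) = 0
  · -- affinely dependent case
    have hsum : ∑ i, g i • y i = 0 := by
      ext j
      simp only [Finset.sum_apply, Pi.smul_apply, smul_eq_mul, Pi.zero_apply]
      have h := hrel j
      have h5 : (∑ i, g i * y i j) - (∑ i, g i * z j) = 0 := by
        rw [← Finset.sum_sub_distrib]
        simpa [mul_sub] using h
      have h6 : ∑ i, g i * z j = (∑ i, g i) * z j := by rw [Finset.sum_mul]
      rw [h6, hS, zero_mul, sub_zero] at h5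
      exact h5
    have hdep : ¬ AffineIndependent ℝ y := by
      intro hind
      obtain ⟨i, hi⟩ := Function.ne_iff.mp hg0
      exact hi (affineIndependent_iff.mp hind Finset.univ g hS hsum i (Finset.mem_univ i))
    rcases Nat.lt_or_ge d 2 with hd2 | hd2
    · -- d = 1 : impossible
      have hd1 : d = 1 := by omega
      subst hd1
      exact hdep (affineIndependent_of_subsingleton ℝ y)
    · apply hws
      refine ⟨affineSpan ℝ (Set.range y), ?_, ?_⟩
      · rw [direction_affineSpan]
        have hle : Module.finrank ℝ (vectorSpan ℝ (Set.range y)) ≤ d - 2 := by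
          rw [finrank_vectorSpan_le_iff_not_affineIndependent ℝ y
            (by simp [Fintype.card_fin]; omega : Fintype.card (Fin d) = (d - 2) + 2)]
          exact hdep
        have : (Module.finrank ℝ (vectorSpan ℝ (Set.range y)) : ℤ) ≤ ((d : ℤ) - 2) := by
          calc (Module.finrank ℝ (vectorSpan ℝ (Set.range y)) : ℤ) ≤ ((d - 2 : ℕ) : ℤ) := by
                exact_mod_cast hle
            _ ≤ (d : ℤ) - 2 := by omega
        exact this
      · intro i
        exact ⟨y i, subset_affineSpan ℝ _ ⟨i, rfl⟩, hmem i⟩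
  · -- z is an affine combination of the y i
    have hz' : z = ∑ i, (g i / (∑ k, g k)) • y i := by
      ext j
      have h := hrel j
      have h2 : (∑ i, g i * y i j) = (∑ k, g k) * z j := by
        have h5 : (∑ i, g i * y i j) - (∑ i, g i * z j) = 0 := by
          rw [← Finset.sum_sub_distrib]
          simpa [mul_sub] using h
        have h6 : ∑ i, g i * z j = (∑ k, g k) * z j := by rw [Finset.sum_mul]
        linarith [h5, h6]
      simp only [Finset.sum_apply, Pi.smul_apply, smul_eq_mul]
      have h3 : ∑ x : Fin d, g x / (∑ k, g k) * y x j = (∑ x : Fin d, g x * y x j) / (∑ k, g k) := by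
        rw [Finset.sum_div]
        exact Finset.sum_congr rfl fun x _ => by ring
      rw [h3, h2]
      field_simp
    have hsum : ∑ i, g i / (∑ k, g k) = 1 := by
      rw [← Finset.sum_div, div_self hS]
    apply hz
    rw [hz', dmap_affine_sum hd _ _ hsum, dmap_affine_sum hd _ _ hsum,
      Finset.mul_sum, Finset.mul_sum, ← Finset.sum_add_distrib]
    refine Finset.sum_eq_zero fun i _ => ?_
    have h4 : a * (g i / (∑ k, g k) * Dmap v (y i)) + b * (g i / (∑ k, g k) * Dmap w (y i))
        = (g i / (∑ k, g k)) * (a * Dmap v (y i) + b * Dmap w (y i)) := by ring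
    rw [h4, hzero i, mul_zero]

/-- ratio bounds -/
lemma ratio_mem {A B : ℝ} (hprod : A * B ≤ 0) (hden : A - B ≠ 0) :
    0 ≤ A / (A - B) ∧ A / (A - B) ≤ 1 := by
  rcases lt_or_gt_of_ne hden with h | h
  · have hA : A ≤ 0 := by nlinarith
    have hB : 0 ≤ B := by nlinarith
    constructor
    · rw [div_nonneg_iff]
      right; exact ⟨hA, le_of_lt h⟩
    · rw [div_le_one_iff]
      right; right; exact ⟨h, by linarith⟩
  · have hA : 0 ≤ A := by nlinarith
    have hB : B ≤ 0 := by nlinarith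
    constructor
    · exact div_nonneg hA (le_of_lt h)
    · rw [div_le_one h]; linarith

/-- walk sign change -/
lemma exists_adj_nonpos (f : ℕ → ℝ) (n : ℕ) (h : f 0 * f n < 0) :
    ∃ k < n, f k * f (k + 1) ≤ 0 := by
  by_contra hc
  push_neg at hc
  have hf0 : f 0 ≠ 0 := by
    intro h0; rw [h0, zero_mul] at h; exact lt_irrefl 0 h
  have key : ∀ m, m ≤ n → 0 < f 0 * f m := by
    intro m
    induction m with
    | zero => intro _; exact mul_self_pos.mpr hf0
    | succ m ih =>
      intro hm
      have h1 := ih (le_trans (Nat.le_succ m) hm)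
      have h2 := hc m (Nat.lt_of_succ_le hm)
      nlinarith [mul_pos h1 h2, sq_nonneg (f m)]
  nlinarith [key n le_rfl, h]

/-- continuous nonvanishing on Icc keeps sign -/
lemma pos_prod_of_nonvanishing {f : ℝ → ℝ} (hf : Continuous f)
    (h : ∀ t ∈ Set.Icc (0:ℝ) 1, f t ≠ 0) : 0 < f 0 * f 1 := by
  rcases lt_trichotomy (f 0 * f 1) 0 with hlt | heq | hgt
  · exfalso
    rcases mul_neg_iff.mp hlt with ⟨h1, h2⟩ | ⟨h1, h2⟩
    · have h0 : (0:ℝ) ∈ Set.Icc (f 1) (f 0) := ⟨le_of_lt h2, le_of_lt h1⟩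
      obtain ⟨t, ht, hft⟩ := intermediate_value_Icc' zero_le_one hf.continuousOn h0
      exact h t ht hft
    · have h0 : (0:ℝ) ∈ Set.Icc (f 0) (f 1) := ⟨le_of_lt h1, le_of_lt h2⟩
      obtain ⟨t, ht, hft⟩ := intermediate_value_Icc zero_le_one hf.continuousOn h0
      exact h t ht hft
  · exfalso
    rcases mul_eq_zero.mp heq with h0 | h0
    · exact h 0 ⟨le_rfl, zero_le_one⟩ h0
    · exact h 1 ⟨zero_le_one, le_rfl⟩ h0
  · exact hgt

/-- existence of a point where the two determinant functionals have opposite signs -/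
lemma exists_z (hd : 0 < d) (v w : Fin d → Fin d → ℝ) (p r : Fin d → ℝ)
    (hap : Dmap v p = 0) (hbp : Dmap w p ≠ 0) (har : Dmap v r ≠ 0) :
    ∃ z, Dmap v z * Dmap w z < 0 := by
  set c := Dmap w p with hc
  set e := Dmap w r with he
  set A := Dmap v r with hA
  set m : ℝ := |c| / (2 * (|c| + |e|) + 1) with hm
  have hc0 : c ≠ 0 := hbp
  have hA0 : A ≠ 0 := har
  have hm0 : 0 < m := div_pos (abs_pos.mpr hc0) (by positivity)
  have hmkey : m * (|c| + |e|) ≤ |c| / 2 := by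
    rw [hm, div_mul_eq_mul_div, div_le_div_iff₀ (by positivity) (by norm_num)]
    nlinarith [abs_nonneg c, abs_nonneg e]
  set s : ℝ := if 0 < A * c then -m else m with hs
  have hsabs : |s| = m := by
    rcases le_or_gt (A * c) 0 with h' | h'
    · rw [hs, if_neg (not_lt.mpr h'), abs_of_pos hm0]
    · rw [hs, if_pos h', abs_neg, abs_of_pos hm0]
  refine ⟨(1 - s) • p + s • r, ?_⟩
  have hva : Dmap v ((1 - s) • p + s • r) = s * A := by
    rw [dmap_combo hd, hap, hA]; ring
  have hvb : Dmap w ((1 - s) • p + s • r) = (1 - s) * c + s * e := by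
    rw [dmap_combo hd, hc, he]
  rw [hva, hvb]
  -- b-value has the same sign as c
  have hbz : 0 < c * ((1 - s) * c + s * e) := by
    have habs : |s * (e * c)| = m * |e * c| := by rw [abs_mul, hsabs]
    have h1b : -(m * |e * c|) ≤ s * (e * c) := by
      have := neg_abs_le (s * (e * c)); linarith [habs ▸ this]
    have h2 : s * (c * c) ≤ m * (c * c) := by
      have hs' : s ≤ m := by rw [← hsabs]; exact le_abs_self s
      nlinarith [mul_self_nonneg c]
    have h3 : |e * c| = |e| * |c| := abs_mul _ _
    have h4 : c * c = |c| * |c| := (abs_mul_abs_self c).symm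
    have hkey2 : m * (|c| + |e|) * |c| ≤ |c| / 2 * |c| :=
      mul_le_mul_of_nonneg_right hmkey (abs_nonneg c)
    nlinarith [abs_pos.mpr hc0, h1b, h2, h3, h4, hkey2]
  rcases lt_or_ge 0 (A * c) with hAc | hAc
  · -- s = -m
    have hsval : s = -m := by rw [hs, if_pos hAc]
    have hAbz : 0 < A * ((1 - s) * c + s * e) := by
      nlinarith [mul_pos hAc hbz, mul_self_pos.mpr hc0]
    calc s * A * ((1 - s) * c + s * e) = -m * (A * ((1 - s) * c + s * e)) := by rw [hsval]; ring
      _ < 0 := by nlinarith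
  · have hAc' : A * c < 0 := lt_of_le_of_ne hAc (mul_ne_zero hA0 hc0)
    have hsval : s = m := by rw [hs, if_neg (not_lt.mpr hAc)]
    have hAbz : A * ((1 - s) * c + s * e) < 0 := by
      nlinarith [mul_pos (neg_pos.mpr hAc') hbz, mul_self_pos.mpr hc0]
    calc s * A * ((1 - s) * c + s * e) = m * (A * ((1 - s) * c + s * e)) := by rw [hsval]; ring
      _ < 0 := by nlinarith

/-- The section along a segment, following the moving hyperplane. -/
lemma section_exists (hd : 0 < d) (v w : Fin d → Fin d → ℝ) (u₁ u₂ : Fin d → ℝ)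
    (h₁ : Dmap v u₁ = 0)
    (hprod : ∀ t ∈ Set.Icc (0:ℝ) 1,
      ((1 - t) * Dmap v u₁ - t * Dmap w u₁) * ((1 - t) * Dmap v u₂ - t * Dmap w u₂) ≤ 0)
    (hden : ∀ t ∈ Set.Icc (0:ℝ) 1,
      ((1 - t) * Dmap v u₁ - t * Dmap w u₁) - ((1 - t) * Dmap v u₂ - t * Dmap w u₂) ≠ 0) :
    ∃ x : ℝ → (Fin d → ℝ), Continuous x ∧ x 0 = u₁ ∧
      (∀ t ∈ Set.Icc (0:ℝ) 1, x t ∈ segment ℝ u₁ u₂) ∧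
      (∀ t ∈ Set.Icc (0:ℝ) 1, (1 - t) * Dmap v (x t) - t * Dmap w (x t) = 0) := by
  classical
  set τ : ℝ → ℝ := fun t => max 0 (min 1 t) with hτ
  have hτc : Continuous τ := continuous_const.max (continuous_const.min continuous_id)
  have hτIcc : ∀ t, τ t ∈ Set.Icc (0:ℝ) 1 := fun t =>
    ⟨le_max_left _ _, max_le zero_le_one (min_le_left _ _)⟩
  have hτid : ∀ t ∈ Set.Icc (0:ℝ) 1, τ t = t := by
    intro t ht
    rw [hτ]
    simp only [min_eq_right ht.2, max_eq_right ht.1]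
  set A : ℝ → ℝ := fun t => (1 - τ t) * Dmap v u₁ - τ t * Dmap w u₁ with hA
  set B : ℝ → ℝ := fun t => (1 - τ t) * Dmap v u₂ - τ t * Dmap w u₂ with hB
  have hAc : Continuous A := by
    apply Continuous.sub
    · exact (continuous_const.sub hτc).mul continuous_const
    · exact hτc.mul continuous_const
  have hBc : Continuous B := by
    apply Continuous.sub
    · exact (continuous_const.sub hτc).mul continuous_const
    · exact hτc.mul continuous_const
  have hdm : ∀ t, A t - B t ≠ 0 := fun t => hden (τ t) (hτIcc t)
  set s : ℝ → ℝ := fun t => A t / (A t - B t) with hs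
  have hsc : Continuous s := hAc.div (hAc.sub hBc) hdm
  set x : ℝ → (Fin d → ℝ) := fun t => (1 - s t) • u₁ + s t • u₂ with hx
  have hxc : Continuous x := by
    apply Continuous.add
    · exact (continuous_const.sub hsc).smul continuous_const
    · exact hsc.smul continuous_const
  have hx0 : x 0 = u₁ := by
    have hτ0 : τ 0 = 0 := hτid 0 ⟨le_rfl, zero_le_one⟩
    have hA0 : A 0 = 0 := by simp only [hA, hτ0, h₁]; ring
    have hs0 : s 0 = 0 := by simp only [hs, hA0, zero_div]
    simp only [hx, hs0]
    simp
  have hsmem : ∀ t ∈ Set.Icc (0:ℝ) 1, 0 ≤ s t ∧ s t ≤ 1 := by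
    intro t ht
    have h1 := hprod (τ t) (hτIcc t)
    have h2 := hden (τ t) (hτIcc t)
    have := ratio_mem (A := A t) (B := B t) ?_ ?_
    · simpa only [hs] using this
    · simpa only [hA, hB] using h1
    · simpa only [hA, hB] using h2
  refine ⟨x, hxc, hx0, ?_, ?_⟩
  · intro t ht
    obtain ⟨hs1, hs2⟩ := hsmem t ht
    exact ⟨1 - s t, s t, by linarith, hs1, by ring, rfl⟩
  · intro t ht
    have hτt : τ t = t := hτid t ht
    have hv' : Dmap v (x t) = (1 - s t) * Dmap v u₁ + s t * Dmap v u₂ := dmap_combo hd v (s t) u₁ u₂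
    have hw' : Dmap w (x t) = (1 - s t) * Dmap w u₁ + s t * Dmap w u₂ := dmap_combo hd w (s t) u₁ u₂
    rw [hv', hw']
    have hkey : (1 - t) * ((1 - s t) * Dmap v u₁ + s t * Dmap v u₂)
        - t * ((1 - s t) * Dmap w u₁ + s t * Dmap w u₂)
        = (1 - s t) * (A t) + s t * (B t) := by
      simp only [hA, hB, hτt]; ring
    rw [hkey]
    have hd2 := hdm t
    simp only [hs]
    field_simp
    ring

/-- Unified per-colour path construction. -/
lemma path_color (hd : 0 < d) (v w : Fin d → Fin d → ℝ) (u₁ u₂ : Fin d → ℝ) (s : ℝ)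
    (hs : s = 1 ∨ s = -1)
    (ha₁ : Dmap v u₁ = 0)
    (hb₁ : 0 ≤ s * Dmap w u₁)
    (ha₂ : 0 < s * Dmap v u₂)
    (hb₂ : s * Dmap w u₂ ≤ 0)
    (hbb : 0 < s * (Dmap w u₁ - Dmap w u₂)) :
    ∃ x : ℝ → (Fin d → ℝ), Continuous x ∧ x 0 = u₁ ∧
      (∀ t ∈ Set.Icc (0:ℝ) 1, x t ∈ segment ℝ u₁ u₂) ∧
      (∀ t ∈ Set.Icc (0:ℝ) 1, (1 - t) * Dmap v (x t) - t * Dmap w (x t) = 0) := by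
  have hss : s * s = 1 := by rcases hs with h | h <;> rw [h] <;> norm_num
  apply section_exists hd v w u₁ u₂ ha₁
  · intro t ht
    obtain ⟨ht0, ht1⟩ := ht
    have hA : s * ((1 - t) * Dmap v u₁ - t * Dmap w u₁) ≤ 0 := by
      rw [ha₁]
      have : s * ((1 - t) * 0 - t * Dmap w u₁) = -t * (s * Dmap w u₁) := by ring
      rw [this]
      nlinarith
    have hB : 0 ≤ s * ((1 - t) * Dmap v u₂ - t * Dmap w u₂) := by
      have : s * ((1 - t) * Dmap v u₂ - t * Dmap w u₂)
          = (1 - t) * (s * Dmap v u₂) + t * (-(s * Dmap w u₂)) := by ring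
      rw [this]
      nlinarith
    nlinarith [mul_nonpos_of_nonpos_of_nonneg hA hB]
  · intro t ht
    obtain ⟨ht0, ht1⟩ := ht
    have hkey : s * (((1 - t) * Dmap v u₁ - t * Dmap w u₁)
        - ((1 - t) * Dmap v u₂ - t * Dmap w u₂)) < 0 := by
      rw [ha₁]
      have heq : s * (((1 - t) * 0 - t * Dmap w u₁) - ((1 - t) * Dmap v u₂ - t * Dmap w u₂))
          = -((1 - t) * (s * Dmap v u₂) + t * (s * (Dmap w u₁ - Dmap w u₂))) := by ring
      rw [heq]
      rcases lt_or_ge t 1 with h | h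
      · nlinarith
      · have ht1' : t = 1 := le_antisymm ht1 h
        rw [ht1']; nlinarith
    intro hzero
    rw [hzero, mul_zero] at hkey
    exact lt_irrefl 0 hkey

/-- The hybrid interpolation argument at a fixed hyperplane. -/
lemma hybrid (hd : 0 < d) (P : Fin d → Set (Fin d → ℝ)) (hws : WellSeparated P)
    (w : Fin d → Fin d → ℝ) (z : Fin d → ℝ) (F G : Fin d → Fin d → ℝ)
    (hF : ∀ i, F i ∈ convexHull ℝ (P i)) (hG : ∀ i, G i ∈ convexHull ℝ (P i))
    (hcF : ∀ i, Dmap w (F i) = 0) (hcG : ∀ i, Dmap w (G i) = 0)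
    (hz : Dmap w z ≠ 0)
    (hsign : Dmap F z * Dmap G z < 0) : False := by
  classical
  set H : ℕ → Fin d → Fin d → ℝ := fun k i => if (i : ℕ) < k then G i else F i with hH
  have hH0 : H 0 = F := by
    funext i; simp [hH]
  have hHd : H d = G := by
    funext i; simp [hH, i.isLt]
  set f : ℕ → ℝ := fun k => Dmap (H k) z with hf
  have hf0d : f 0 * f d < 0 := by
    simp only [hf, hH0, hHd]; exact hsign
  obtain ⟨k, hk, hkk⟩ := exists_adj_nonpos f d hf0d
  set k' : Fin d := ⟨k, hk⟩ with hk'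
  have hHmem : ∀ m i, H m i ∈ convexHull ℝ (P i) := by
    intro m i
    by_cases h : (i : ℕ) < m <;> simp only [hH, h, if_pos, if_neg, if_true, if_false]
    · exact hG i
    · exact hF i
  have hHzero : ∀ m i, Dmap w (H m i) = 0 := by
    intro m i
    by_cases h : (i : ℕ) < m <;> simp only [hH, h, if_pos, if_neg, if_true, if_false]
    · exact hcG i
    · exact hcF i
  -- static core for a family all lying on the hyperplane of w
  have core : ∀ y : Fin d → Fin d → ℝ, (∀ i, y i ∈ convexHull ℝ (P i)) →
      (∀ i, Dmap w (y i) = 0) → Dmap y z = 0 → False := by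
    intro y h1 h2 h3
    exact static_core hd P hws w w z 0 1 y h1 (fun i => by rw [h2 i]; ring)
      (by rw [zero_mul, zero_add, one_mul]; exact hz) h3
  rcases eq_or_lt_of_le hkk with heq | hlt
  · -- one of the two is zero
    rcases mul_eq_zero.mp heq with h0 | h0
    · exact core (H k) (hHmem k) (hHzero k) h0
    · exact core (H (k + 1)) (hHmem (k + 1)) (hHzero (k + 1)) h0
  · -- strictly opposite signs
    have hfk : f k ≠ 0 := fun h0 => by rw [h0, zero_mul] at hlt; exact lt_irrefl 0 hlt
    have hupd1 : Function.update (H k) k' (F k') = H k := by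
      funext i
      by_cases h : i = k'
      · subst h; simp [hH, Function.update_self]; intro h; exact absurd h (lt_irrefl k)
      · simp [Function.update_of_ne h]
    have hupd2 : Function.update (H k) k' (G k') = H (k + 1) := by
      funext i
      by_cases h : i = k'
      · subst h; simp [hH, Function.update_self, hk']
      · have : ((i : ℕ) < k + 1) ↔ ((i : ℕ) < k) := by
          constructor
          · intro hlt'
            rcases Nat.lt_succ_iff_lt_or_eq.mp hlt' with h' | h'
            · exact h'
            · exact absurd (Fin.ext h' : i = k') h
          · exact fun h' => Nat.lt_succ_of_lt h'
        simp only [Function.update_of_ne h, hH, this]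
    set σ : ℝ := f k / (f k - f (k + 1)) with hσ
    have hden : f k - f (k + 1) ≠ 0 := by
      intro h0
      have : f k = f (k + 1) := by linarith
      rw [this] at hlt
      nlinarith
    obtain ⟨hσ0, hσ1⟩ := ratio_mem (le_of_lt hlt) hden
    set y₀ : Fin d → ℝ := (1 - σ) • F k' + σ • G k' with hy₀
    have hdet : Dmap (Function.update (H k) k' y₀) z = 0 := by
      rw [hy₀, dmap_update_combo, hupd1, hupd2]
      show (1 - σ) * f k + σ * f (k + 1) = 0
      rw [hσ]
      field_simp
      ring
    apply core (Function.update (H k) k' y₀)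
    · intro i
      by_cases h : i = k'
      · subst h
        rw [Function.update_self]
        have hseg : y₀ ∈ segment ℝ (F k') (G k') := ⟨1 - σ, σ, by linarith, hσ0, by ring, rfl⟩
        exact (convex_convexHull ℝ (P k')).segment_subset (hF k') (hG k') hseg
      · rw [Function.update_of_ne h]; exact hHmem k i
    · intro i
      by_cases h : i = k'
      · subst h
        rw [Function.update_self, hy₀, dmap_combo hd, hcF, hcG]
        ring
      · rw [Function.update_of_ne h]; exact hHzero k i
    · exact hdet

/-- Master contradiction lemma. -/
lemma master (hd : 0 < d) (P : Fin d → Set (Fin d → ℝ)) (hws : WellSeparated P)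
    (v w : Fin d → Fin d → ℝ) (z : Fin d → ℝ)
    (hwP : ∀ i, w i ∈ convexHull ℝ (P i))
    (x : Fin d → ℝ → (Fin d → ℝ))
    (hcont : ∀ i, Continuous (x i))
    (hx0 : ∀ i, x i 0 = v i)
    (hmem : ∀ i, ∀ t ∈ Set.Icc (0:ℝ) 1, x i t ∈ convexHull ℝ (P i))
    (hzero : ∀ i, ∀ t ∈ Set.Icc (0:ℝ) 1, (1 - t) * Dmap v (x i t) - t * Dmap w (x i t) = 0)
    (hz : Dmap v z * Dmap w z < 0) : False := by
  classical
  have hcz : ∀ t ∈ Set.Icc (0:ℝ) 1, (1 - t) * Dmap v z + (-t) * Dmap w z ≠ 0 := by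
    intro t ht h0
    obtain ⟨ht0, ht1⟩ := ht
    rcases mul_neg_iff.mp hz with ⟨h1, h2⟩ | ⟨h1, h2⟩
    · have e1 : (0:ℝ) ≤ (1 - t) * Dmap v z := mul_nonneg (by linarith) h1.le
      have e2 : (0:ℝ) ≤ t * (-(Dmap w z)) := mul_nonneg ht0 (by linarith)
      have e3 : (1 - t) * Dmap v z = 0 := by nlinarith
      rcases mul_eq_zero.mp e3 with h3 | h3
      · have ht' : t = 1 := by linarith
        rw [ht'] at h0
        have : Dmap w z = 0 := by linarith
        exact h2.ne this
      · exact h1.ne' h3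
    · have e1 : (0:ℝ) ≤ (1 - t) * (-(Dmap v z)) := mul_nonneg (by linarith) (by linarith)
      have e2 : (0:ℝ) ≤ t * Dmap w z := mul_nonneg ht0 h2.le
      have e3 : (1 - t) * (-(Dmap v z)) = 0 := by nlinarith
      rcases mul_eq_zero.mp e3 with h3 | h3
      · have ht' : t = 1 := by linarith
        rw [ht'] at h0
        have : Dmap w z = 0 := by linarith
        exact h2.ne' this
      · exact h1.ne (by linarith)
  set δ : ℝ → ℝ := fun t => Dmap (fun i => x i t) z with hδ
  have hδc : Continuous δ := dmap_continuous_family x hcont z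
  have hδ0 : δ 0 = Dmap v z := by
    simp only [hδ]
    congr 1
    funext i
    exact hx0 i
  have hδne : ∀ t ∈ Set.Icc (0:ℝ) 1, δ t ≠ 0 := by
    intro t ht h0
    exact static_core hd P hws v w z (1 - t) (-t) (fun i => x i t)
      (fun i => hmem i t ht)
      (fun i => by have := hzero i t ht; linarith [this])
      (hcz t ht) h0
  have hδprod : 0 < δ 0 * δ 1 := pos_prod_of_nonvanishing hδc hδne
  have h1mem : (1:ℝ) ∈ Set.Icc (0:ℝ) 1 := ⟨zero_le_one, le_rfl⟩
  have hFzero : ∀ i, Dmap w (x i 1) = 0 := by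
    intro i
    have := hzero i 1 h1mem
    linarith [this]
  have hzw : Dmap w z ≠ 0 := by
    intro h0; rw [h0, mul_zero] at hz; exact lt_irrefl 0 hz
  have hsign : δ 1 * Dmap w z < 0 := by
    rw [hδ0] at hδprod
    nlinarith [mul_pos hδprod (neg_pos.mpr hz), sq_nonneg (Dmap v z)]
  exact hybrid hd P hws w z (fun i => x i 1) w
    (fun i => hmem i 1 h1mem) hwP hFzero (fun i => dmap_self w i) hzw hsign

def IsSink (Q : Fin d → Set (Fin d → ℝ)) (ε : Fin d → ℝ) (v : Fin d → (Fin d → ℝ)) : Prop :=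
  (∀ i, v i ∈ Q i) ∧ ∀ i, ∀ q ∈ Q i, q ≠ v i → 0 < ε i * Dmap v q

lemma sink_unique (hd : 0 < d) (P : Fin d → Set (Fin d → ℝ)) (hws : WellSeparated P)
    (ε : Fin d → ℝ) (hε : ∀ i, ε i = 1 ∨ ε i = -1)
    (Q : Fin d → Set (Fin d → ℝ)) (hQP : ∀ i, Q i ⊆ P i)
    (v w : Fin d → Fin d → ℝ) (hv : IsSink Q ε v) (hw : IsSink Q ε w) : v = w := by
  classical
  by_contra hne
  obtain ⟨j, hj⟩ : ∃ j, v j ≠ w j := by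
    by_contra h; push_neg at h; exact hne (funext h)
  have hQconv : ∀ i, ∀ y ∈ Q i, y ∈ convexHull ℝ (P i) := fun i y hy =>
    subset_convexHull ℝ (P i) (hQP i hy)
  have hfa : ∀ i, v i ≠ w i → 0 < ε i * Dmap v (w i) := fun i h =>
    hv.2 i (w i) (hw.1 i) (fun he => h he.symm)
  have hfb : ∀ i, v i ≠ w i → 0 < ε i * Dmap w (v i) := fun i h =>
    hw.2 i (v i) (hv.1 i) h
  have hbne : Dmap w (v j) ≠ 0 := by
    intro h0
    have := hfb j hj
    rw [h0, mul_zero] at this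
    exact lt_irrefl 0 this
  have hane : Dmap v (w j) ≠ 0 := by
    intro h0
    have := hfa j hj
    rw [h0, mul_zero] at this
    exact lt_irrefl 0 this
  obtain ⟨z, hz⟩ := exists_z hd v w (v j) (w j) (dmap_self v j) hbne hane
  have hpaths : ∀ i, ∃ x : ℝ → (Fin d → ℝ), Continuous x ∧ x 0 = v i ∧
      (∀ t ∈ Set.Icc (0:ℝ) 1, x t ∈ convexHull ℝ (P i)) ∧
      (∀ t ∈ Set.Icc (0:ℝ) 1, (1 - t) * Dmap v (x t) - t * Dmap w (x t) = 0) := by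
    intro i
    by_cases h : v i = w i
    · refine ⟨fun _ => v i, continuous_const, rfl, fun t _ => hQconv i _ (hv.1 i), fun t _ => ?_⟩
      have h1 : Dmap v (v i) = 0 := dmap_self v i
      have h2 : Dmap w (v i) = 0 := by rw [h]; exact dmap_self w i
      rw [h1, h2]; ring
    · obtain ⟨x, hxc, hx0, hseg, hz0⟩ := path_color hd v w (v i) (w i) (ε i) (hε i)
        (dmap_self v i) (le_of_lt (hfb i h)) (hfa i h)
        (by rw [dmap_self w i, mul_zero])
        (by rw [dmap_self w i, sub_zero]; exact hfb i h)
      refine ⟨x, hxc, hx0, fun t ht => ?_, hz0⟩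
      exact (convex_convexHull ℝ (P i)).segment_subset
        (hQconv i _ (hv.1 i)) (hQconv i _ (hw.1 i)) (hseg t ht)
  choose x hxc hx0 hxm hxz using hpaths
  exact master hd P hws v w z (fun i => hQconv i _ (hw.1 i)) x hxc hx0 hxm hxz hz

lemma swap_lemma (hd : 0 < d) (P : Fin d → Set (Fin d → ℝ)) (hws : WellSeparated P)
    (hgp : ∀ p : Fin d → (Fin d → ℝ), (∀ i, p i ∈ P i) →
      ∀ j : Fin d, ∀ q ∈ P j, q ≠ p j → Dmap p q ≠ 0)
    (ε : Fin d → ℝ) (hε : ∀ i, ε i = 1 ∨ ε i = -1)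
    (Q : Fin d → Set (Fin d → ℝ)) (hQP : ∀ i, Q i ⊆ P i)
    (j : Fin d) (q₀ : Fin d → ℝ) (hq₀ : q₀ ∈ Q j)
    (v : Fin d → Fin d → ℝ)
    (hv : IsSink (Function.update Q j (Q j \ {q₀})) ε v)
    (hvq₀ : ε j * Dmap v q₀ < 0)
    (w : Fin d → Fin d → ℝ)
    (hw : IsSink (Function.update Q j {q₀}) ε w)
    (q₁ : Fin d → ℝ) (hq₁ : q₁ ∈ Q j) (hq₁0 : q₁ ≠ q₀)
    (hq₁bad : ε j * Dmap w q₁ < 0) : False := by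
  classical
  have hεsq : ε j * ε j = 1 := by rcases hε j with h | h <;> rw [h] <;> norm_num
  -- basic memberships
  have hvQ : ∀ i, v i ∈ Q i := by
    intro i
    by_cases h : i = j
    · subst h
      have := hv.1 i
      rw [Function.update_self] at this
      exact this.1
    · have := hv.1 i
      rwa [Function.update_of_ne h] at this
  have hwq : w j = q₀ := by
    have := hw.1 j
    rw [Function.update_self] at this
    exact this
  have hwQ : ∀ i, w i ∈ Q i := by
    intro i
    by_cases h : i = j
    · subst h; rw [hwq]; exact hq₀
    · have := hw.1 i
      rwa [Function.update_of_ne h] at this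
  have hvP : ∀ i, v i ∈ P i := fun i => hQP i (hvQ i)
  have hwP : ∀ i, w i ∈ P i := fun i => hQP i (hwQ i)
  have hQconv : ∀ i, ∀ y ∈ Q i, y ∈ convexHull ℝ (P i) := fun i y hy =>
    subset_convexHull ℝ (P i) (hQP i hy)
  have hvj0 : v j ≠ q₀ := by
    have := hv.1 j
    rw [Function.update_self] at this
    exact fun h => this.2 (by rw [h]; exact Set.mem_singleton q₀)
  -- sink facts off colour j
  have hfa : ∀ i, i ≠ j → v i ≠ w i → 0 < ε i * Dmap v (w i) := by
    intro i hij h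
    apply hv.2 i (w i) _ (fun he => h he.symm)
    rw [Function.update_of_ne hij]
    exact hwQ i
  have hfb : ∀ i, i ≠ j → v i ≠ w i → 0 < ε i * Dmap w (v i) := by
    intro i hij h
    apply hw.2 i (v i) _ h
    rw [Function.update_of_ne hij]
    exact hvQ i
  -- gp facts
  have hbvj : Dmap w (v j) ≠ 0 := by
    apply hgp w hwP j (v j) (hvP j)
    rw [hwq]; exact hvj0
  have havq₀ : Dmap v q₀ ≠ 0 := by
    intro h0; rw [h0, mul_zero] at hvq₀; exact lt_irrefl 0 hvq₀
  obtain ⟨z, hz⟩ := exists_z hd v w (v j) q₀ (dmap_self v j) hbvj havq₀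
  -- path for colour j
  have hpathj : ∃ x : ℝ → (Fin d → ℝ), Continuous x ∧ x 0 = v j ∧
      (∀ t ∈ Set.Icc (0:ℝ) 1, x t ∈ convexHull ℝ (P j)) ∧
      (∀ t ∈ Set.Icc (0:ℝ) 1, (1 - t) * Dmap v (x t) - t * Dmap w (x t) = 0) := by
    rcases lt_or_ge (ε j * Dmap w (v j)) 0 with hbv | hbv
    · -- branch A : segment [v j, q₀], sign -ε j
      obtain ⟨x, hxc, hx0, hseg, hz0⟩ := path_color hd v w (v j) q₀ (-(ε j))
        (by rcases hε j with h | h <;> rw [h] <;> norm_num)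
        (dmap_self v j)
        (by rw [neg_mul]; linarith)
        (by rw [neg_mul]; linarith)
        (by rw [← hwq, dmap_self w j, mul_zero])
        (by rw [← hwq, dmap_self w j, sub_zero, neg_mul]; linarith)
      refine ⟨x, hxc, hx0, fun t ht => ?_, hz0⟩
      exact (convex_convexHull ℝ (P j)).segment_subset
        (hQconv j _ (hvQ j)) (hQconv j _ hq₀) (hseg t ht)
    · -- branch B : segment [v j, q₁], sign ε j
      have hbv' : 0 < ε j * Dmap w (v j) := by
        rcases lt_or_eq_of_le hbv with h | h
        · exact h
        · exfalso; apply hbvj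
          rcases hε j with hh | hh <;> rw [hh] at h <;> linarith
      have hq₁vj : q₁ ≠ v j := by
        intro h
        rw [h] at hq₁bad
        linarith
      have haq₁ : 0 < ε j * Dmap v q₁ := by
        apply hv.2 j q₁ _ hq₁vj
        rw [Function.update_self]
        exact ⟨hq₁, hq₁0⟩
      obtain ⟨x, hxc, hx0, hseg, hz0⟩ := path_color hd v w (v j) q₁ (ε j) (hε j)
        (dmap_self v j) (le_of_lt hbv') haq₁ (le_of_lt hq₁bad)
        (by rw [mul_sub]; linarith)
      refine ⟨x, hxc, hx0, fun t ht => ?_, hz0⟩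
      exact (convex_convexHull ℝ (P j)).segment_subset
        (hQconv j _ (hvQ j)) (hQconv j _ hq₁) (hseg t ht)
  -- paths for other colours
  have hpaths : ∀ i, ∃ x : ℝ → (Fin d → ℝ), Continuous x ∧ x 0 = v i ∧
      (∀ t ∈ Set.Icc (0:ℝ) 1, x t ∈ convexHull ℝ (P i)) ∧
      (∀ t ∈ Set.Icc (0:ℝ) 1, (1 - t) * Dmap v (x t) - t * Dmap w (x t) = 0) := by
    intro i
    by_cases hij : i = j
    · subst hij; exact hpathj
    by_cases h : v i = w i
    · refine ⟨fun _ => v i, continuous_const, rfl, fun t _ => hQconv i _ (hvQ i), fun t _ => ?_⟩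
      have h1 : Dmap v (v i) = 0 := dmap_self v i
      have h2 : Dmap w (v i) = 0 := by rw [h]; exact dmap_self w i
      rw [h1, h2]; ring
    · obtain ⟨x, hxc, hx0, hseg, hz0⟩ := path_color hd v w (v i) (w i) (ε i) (hε i)
        (dmap_self v i) (le_of_lt (hfb i hij h)) (hfa i hij h)
        (by rw [dmap_self w i, mul_zero])
        (by rw [dmap_self w i, sub_zero]; exact hfb i hij h)
      refine ⟨x, hxc, hx0, fun t ht => ?_, hz0⟩
      exact (convex_convexHull ℝ (P i)).segment_subset
        (hQconv i _ (hvQ i)) (hQconv i _ (hwQ i)) (hseg t ht)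
  choose x hxc hx0 hxm hxz using hpaths
  exact master hd P hws v w z (fun i => hQconv i _ (hwQ i)) x hxc hx0 hxm hxz hz

lemma update_ncard (Q : Fin d → Set (Fin d → ℝ)) (j : Fin d) (s : Set (Fin d → ℝ)) :
    (fun i => ((Function.update Q j s) i).ncard)
      = Function.update (fun i => (Q i).ncard) j s.ncard := by
  funext i
  by_cases h : i = j
  · subst h; rw [Function.update_self, Function.update_self]
  · rw [Function.update_of_ne h, Function.update_of_ne h]

lemma sum_update (f : Fin d → ℕ) (j : Fin d) (m : ℕ) :
    ∑ i, Function.update f j m i = m + ∑ i ∈ Finset.univ.erase j, f i := by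
  rw [Finset.sum_update_of_mem (Finset.mem_univ j)]
  congr 1
  exact Finset.sum_congr (by rw [Finset.sdiff_singleton_eq_erase]) fun i _ => rfl

lemma sum_split (f : Fin d → ℕ) (j : Fin d) :
    ∑ i, f i = f j + ∑ i ∈ Finset.univ.erase j, f i :=
  (Finset.add_sum_erase Finset.univ f (Finset.mem_univ j)).symm

lemma sink_exists (hd : 0 < d) (P : Fin d → Set (Fin d → ℝ)) (hfin : ∀ i, (P i).Finite)
    (hws : WellSeparated P)
    (hgp : ∀ p : Fin d → (Fin d → ℝ), (∀ i, p i ∈ P i) →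
      ∀ j : Fin d, ∀ q ∈ P j, q ≠ p j → Dmap p q ≠ 0)
    (ε : Fin d → ℝ) (hε : ∀ i, ε i = 1 ∨ ε i = -1) :
    ∀ n : ℕ, ∀ Q : Fin d → Set (Fin d → ℝ), (∀ i, Q i ⊆ P i) → (∀ i, (Q i).Nonempty) →
      (∑ i, (Q i).ncard) ≤ n → ∃ v, IsSink Q ε v := by
  intro n
  induction n with
  | zero =>
    intro Q hQP hQne hn
    exfalso
    set i₀ : Fin d := ⟨0, hd⟩
    have hfin₀ : (Q i₀).Finite := (hfin i₀).subset (hQP i₀)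
    have h1 : 0 < (Q i₀).ncard := (Set.ncard_pos hfin₀).mpr (hQne i₀)
    have h2 : (Q i₀).ncard ≤ ∑ i, (Q i).ncard :=
      Finset.single_le_sum (f := fun i => (Q i).ncard) (fun i _ => Nat.zero_le _)
        (Finset.mem_univ i₀)
    omega
  | succ n ih =>
    intro Q hQP hQne hn
    classical
    by_cases hall : ∀ i, (Q i).ncard = 1
    · have hsingle : ∀ i, ∃ a, Q i = {a} := fun i => Set.ncard_eq_one.mp (hall i)
      choose a ha using hsingle
      refine ⟨a, fun i => by rw [ha i]; exact Set.mem_singleton _, ?_⟩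
      intro i q hq hqa
      exfalso
      rw [ha i] at hq
      exact hqa hq
    · push_neg at hall
      obtain ⟨j, hj⟩ := hall
      have hfinj : (Q j).Finite := (hfin j).subset (hQP j)
      have h1j : 0 < (Q j).ncard := (Set.ncard_pos hfinj).mpr (hQne j)
      have h2j : 2 ≤ (Q j).ncard := by omega
      obtain ⟨q₀, hq₀⟩ := hQne j
      obtain ⟨q₂, hq₂, hq₂0⟩ := Set.exists_ne_of_one_lt_ncard (s := Q j) (by omega) q₀
      -- the smaller grid Q'
      have hQ'P : ∀ i, Function.update Q j (Q j \ {q₀}) i ⊆ P i := by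
        intro i
        by_cases h : i = j
        · subst h; rw [Function.update_self]; exact fun y hy => hQP _ hy.1
        · rw [Function.update_of_ne h]; exact hQP i
      have hQ'ne : ∀ i, (Function.update Q j (Q j \ {q₀}) i).Nonempty := by
        intro i
        by_cases h : i = j
        · subst h; rw [Function.update_self]; exact ⟨q₂, hq₂, hq₂0⟩
        · rw [Function.update_of_ne h]; exact hQne i
      have hsum' : (∑ i, ((Function.update Q j (Q j \ {q₀})) i).ncard) ≤ n := by
        rw [update_ncard, sum_update]
        rw [Set.ncard_diff_singleton_of_mem hq₀]
        have := sum_split (fun i => (Q i).ncard) j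
        omega
      obtain ⟨v, hv⟩ := ih _ hQ'P hQ'ne hsum'
      have hvQ : ∀ i, v i ∈ Q i := by
        intro i
        by_cases h : i = j
        · subst h
          have := hv.1 i; rw [Function.update_self] at this; exact this.1
        · have := hv.1 i; rwa [Function.update_of_ne h] at this
      have hvP : ∀ i, v i ∈ P i := fun i => hQP i (hvQ i)
      have hvj0 : q₀ ≠ v j := by
        have := hv.1 j
        rw [Function.update_self] at this
        exact fun h => this.2 (by rw [← h]; exact Set.mem_singleton q₀)
      have hD0 : Dmap v q₀ ≠ 0 := hgp v hvP j q₀ (hQP j hq₀) hvj0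
      have hεD : ε j * Dmap v q₀ ≠ 0 := by
        rcases hε j with h | h <;> rw [h] <;> simpa using hD0
      rcases lt_or_gt_of_ne hεD with hneg | hpos
      · -- use the auxiliary grid Q'' with a singleton at j
        have hQ''P : ∀ i, Function.update Q j {q₀} i ⊆ P i := by
          intro i
          by_cases h : i = j
          · subst h; rw [Function.update_self]
            intro y hy
            have hy' : y = q₀ := hy
            rw [hy']
            exact hQP _ hq₀
          · rw [Function.update_of_ne h]; exact hQP i
        have hQ''ne : ∀ i, (Function.update Q j {q₀} i).Nonempty := by
          intro i
          by_cases h : i = j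
          · subst h; rw [Function.update_self]; exact ⟨q₀, rfl⟩
          · rw [Function.update_of_ne h]; exact hQne i
        have hsum'' : (∑ i, ((Function.update Q j {q₀}) i).ncard) ≤ n := by
          rw [update_ncard, sum_update, Set.ncard_singleton]
          have := sum_split (fun i => (Q i).ncard) j
          omega
        obtain ⟨w, hw⟩ := ih _ hQ''P hQ''ne hsum''
        have hwq : w j = q₀ := by
          have := hw.1 j; rw [Function.update_self] at this; exact this
        have hwQ : ∀ i, w i ∈ Q i := by
          intro i
          by_cases h : i = j
          · subst h; rw [hwq]; exact hq₀
          · have := hw.1 i; rwa [Function.update_of_ne h] at this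
        have hwP : ∀ i, w i ∈ P i := fun i => hQP i (hwQ i)
        refine ⟨w, hwQ, ?_⟩
        intro i q hq hqw
        by_cases h : i = j
        · subst h
          by_contra hbad
          have hDq : Dmap w q ≠ 0 := by
            apply hgp w hwP i q (hQP i hq)
            exact hqw
          have hεq : ε i * Dmap w q ≠ 0 := by
            rcases hε i with h' | h' <;> rw [h'] <;> simpa using hDq
          have hq1bad : ε i * Dmap w q < 0 := by
            rcases lt_or_gt_of_ne hεq with h' | h'
            · exact h'
            · exact absurd h' hbad
          exact absurd (swap_lemma hd P hws hgp ε hε Q hQP i q₀ hq₀ v hv hneg w hw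
            q hq (by rw [← hwq]; exact hqw) hq1bad) not_false
        · apply hw.2 i q _ hqw
          rw [Function.update_of_ne h]
          exact hq
      · -- v itself is a sink of Q
        refine ⟨v, hvQ, ?_⟩
        intro i q hq hqv
        by_cases h : i = j
        · subst h
          by_cases hqq : q = q₀
          · rw [hqq]; exact hpos
          · apply hv.2 i q _ hqv
            rw [Function.update_self]
            exact ⟨hq, hqq⟩
        · apply hv.2 i q _ hqv
          rw [Function.update_of_ne h]
          exact hq

end TG

open TG in
/-- Given well-separated finite point sets in general position and
`α i ∈ {1, |P i|}`, the grid orientation on colorful selections (an edge from `v` to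
`v[i ↦ q]` is incoming at `v` iff `α i = 1 ∧ D_v q < 0` or `α i = |P i| ∧ D_v q > 0`)
is a grid unique sink orientation: every induced subgrid `Q i ⊆ P i` has exactly one
vertex all of whose subgrid edges are incoming. -/
theorem tangent_grid_uso {d : ℕ} (hd : 1 ≤ d)
    (P : Fin d → Set (Fin d → ℝ))
    (hfin : ∀ i, (P i).Finite) (hne : ∀ i, (P i).Nonempty)
    (hws : WellSeparated P)
    (hgp : ∀ p : Fin d → (Fin d → ℝ), (∀ i, p i ∈ P i) →
      ∀ j : Fin d, ∀ q ∈ P j, q ≠ p j → Dmap p q ≠ 0)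
    (α : Fin d → ℕ) (hα : ∀ i, α i = 1 ∨ α i = (P i).ncard) :
    ∀ Q : Fin d → Set (Fin d → ℝ), (∀ i, Q i ⊆ P i) → (∀ i, (Q i).Nonempty) →
      ∃! v : Fin d → (Fin d → ℝ),
        (∀ i, v i ∈ Q i) ∧
        ∀ i : Fin d, ∀ q ∈ Q i, q ≠ v i →
          ((α i = 1 ∧ Dmap v q < 0) ∨ (α i = (P i).ncard ∧ 0 < Dmap v q)) := by
  intro Q hQP hQne
  classical
  have hd0 : 0 < d := hd
  set ε : Fin d → ℝ := fun i => if α i = 1 then -1 else 1 with hεdef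
  have hε : ∀ i, ε i = 1 ∨ ε i = -1 := by
    intro i
    by_cases h : α i = 1
    · right; simp [hεdef, h]
    · left; simp [hεdef, h]
  have key : ∀ u : Fin d → (Fin d → ℝ),
      ((∀ i, u i ∈ Q i) ∧ ∀ i : Fin d, ∀ q ∈ Q i, q ≠ u i →
        ((α i = 1 ∧ Dmap u q < 0) ∨ (α i = (P i).ncard ∧ 0 < Dmap u q)))
      ↔ IsSink Q ε u := by
    intro u
    constructor
    · rintro ⟨h1, h2⟩
      refine ⟨h1, ?_⟩
      intro i q hq hqu
      have hP2 : 1 < (P i).ncard := by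
        rw [Set.one_lt_ncard_iff (hfin i)]
        exact ⟨q, u i, hQP i hq, hQP i (h1 i), fun h => hqu h⟩
      rcases h2 i q hq hqu with ⟨hα1, hlt⟩ | ⟨hαn, hgt⟩
      · have : ε i = -1 := by simp [hεdef, hα1]
        rw [this]; linarith
      · have hα1 : α i ≠ 1 := by rw [hαn]; omega
        have : ε i = 1 := by simp [hεdef, hα1]
        rw [this]; linarith
    · rintro ⟨h1, h2⟩
      refine ⟨h1, ?_⟩
      intro i q hq hqu
      have h3 := h2 i q hq hqu
      by_cases hα1 : α i = 1
      · left
        refine ⟨hα1, ?_⟩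
        have : ε i = -1 := by simp [hεdef, hα1]
        rw [this] at h3; linarith
      · right
        refine ⟨(hα i).resolve_left hα1, ?_⟩
        have : ε i = 1 := by simp [hεdef, hα1]
        rw [this] at h3; linarith
  obtain ⟨v, hv⟩ := sink_exists hd0 P hfin hws hgp ε hε (∑ i, (Q i).ncard) Q hQP hQne le_rfl
  refine ⟨v, (key v).mpr hv, ?_⟩
  intro y hy
  exact sink_unique hd0 P hws ε hε Q hQP y v ((key y).mp hy) hv
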